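/- Suppose for the system ẋ = f(x, w) with output z = h(x) there exists P ∈ 𝕊ⁿ₊₊ and scalars μ₀, μ₁, μ₂ > 0 such that (i) V̇(x) < 0 whenever xᵀPx > μ₀‖w‖₂², and (ii) ‖z‖₂² ≤ μ₁xᵀPx + μ₂‖w‖₂² for all x, w, where V(x) = xᵀPx. Then for zero initial condition x(0) = 0 and any bounded disturbance w ∈ L∞, the output satisfies ‖z(t)‖₂ ≤ μ‖w‖_{L∞} for all t ≥ 0, with μ = √(μ₀μ₁ + μ₂). -/

import Mathlib

open Matrix

private lemma hasDerivAt_quadform {n : ℕ} (P : Matrix (Fin n) (Fin n) ℝ)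
    (x : ℝ → (Fin n → ℝ)) (x' : Fin n → ℝ) (t : ℝ)
    (hx : HasDerivAt x x' t) :
    HasDerivAt (fun s => x s ⬝ᵥ P.mulVec (x s))
      (x' ⬝ᵥ P.mulVec (x t) + x t ⬝ᵥ P.mulVec x') t := by
  have hxi : ∀ i, HasDerivAt (fun s => x s i) (x' i) t := by
    rw [← hasDerivAt_pi]; exact hx
  have key : ∀ i, HasDerivAt (fun s => x s i * ∑ j, P i j * x s j)
      (x' i * (∑ j, P i j * x t j) + x t i * (∑ j, P i j * x' j)) t := by
    intro i
    exact (hxi i).mul (HasDerivAt.fun_sum fun j _ => (hxi j).const_mul (P i j))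
  have h := HasDerivAt.fun_sum (fun i (_ : i ∈ Finset.univ) => key i)
  simpa [dotProduct, mulVec, Finset.sum_add_distrib] using h

/-- L∞-stability with performance level `μ = √(μ₀μ₁ + μ₂)`: if `V(x) = xᵀPx`
satisfies (i) `V̇ < 0` whenever `xᵀPx > μ₀‖w‖₂²`, and (ii)
`‖z‖₂² ≤ μ₁ xᵀPx + μ₂‖w‖₂²` pointwise, then for zero initial condition and bounded
disturbance `w ∈ L∞`, the output of `ẋ = (A + B_uK)x + B_w w`, `z = (C + DK)x`
satisfies `‖z(t)‖₂ ≤ μ ‖w‖_{L∞}` for all `t ≥ 0`. -/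
theorem linf_stability_performance (n m p q : ℕ)
    (A : Matrix (Fin n) (Fin n) ℝ) (Bu : Matrix (Fin n) (Fin m) ℝ)
    (K : Matrix (Fin m) (Fin n) ℝ) (Bw : Matrix (Fin n) (Fin p) ℝ)
    (C : Matrix (Fin q) (Fin n) ℝ) (D : Matrix (Fin q) (Fin m) ℝ)
    (P : Matrix (Fin n) (Fin n) ℝ) (hP : P.PosDef)
    (μ₀ μ₁ μ₂ : ℝ) (hμ₀ : 0 < μ₀) (hμ₁ : 0 < μ₁) (hμ₂ : 0 < μ₂)
    (x : ℝ → (Fin n → ℝ)) (w : ℝ → (Fin p → ℝ))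
    (hx0 : x 0 = 0)
    (hdyn : ∀ t : ℝ, HasDerivAt x ((A + Bu * K).mulVec (x t) + Bw.mulVec (w t)) t)
    (hwbdd : BddAbove (Set.range fun t : {s : ℝ // 0 ≤ s} =>
        Real.sqrt (w t ⬝ᵥ w t)))
    (hi : ∀ (v : Fin n → ℝ) (u : Fin p → ℝ),
        v ⬝ᵥ P.mulVec v > μ₀ * (u ⬝ᵥ u) →
        ((A + Bu * K).mulVec v + Bw.mulVec u) ⬝ᵥ P.mulVec v
          + v ⬝ᵥ P.mulVec ((A + Bu * K).mulVec v + Bw.mulVec u) < 0)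
    (hii : ∀ (v : Fin n → ℝ) (u : Fin p → ℝ),
        ((C + D * K).mulVec v) ⬝ᵥ ((C + D * K).mulVec v)
          ≤ μ₁ * (v ⬝ᵥ P.mulVec v) + μ₂ * (u ⬝ᵥ u)) :
    ∀ t : ℝ, 0 ≤ t →
      Real.sqrt (((C + D * K).mulVec (x t)) ⬝ᵥ ((C + D * K).mulVec (x t)))
        ≤ Real.sqrt (μ₀ * μ₁ + μ₂)
          * (⨆ s : {s : ℝ // 0 ≤ s}, Real.sqrt (w s ⬝ᵥ w s)) := by
  intro t ht
  set W : ℝ := ⨆ s : {s : ℝ // 0 ≤ s}, Real.sqrt (w s ⬝ᵥ w s) with hWdef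
  set V : ℝ → ℝ := fun s => x s ⬝ᵥ P.mulVec (x s) with hVdef
  have hwle : ∀ s : ℝ, 0 ≤ s → Real.sqrt (w s ⬝ᵥ w s) ≤ W := fun s hs =>
    le_ciSup hwbdd ⟨s, hs⟩
  have hW0 : 0 ≤ W := le_trans (Real.sqrt_nonneg _) (hwle 0 le_rfl)
  have hww : ∀ s : ℝ, 0 ≤ s → w s ⬝ᵥ w s ≤ W ^ 2 := by
    intro s hs
    have h1 : 0 ≤ w s ⬝ᵥ w s := by
      simpa [dotProduct] using
        Finset.sum_nonneg (fun i (_ : i ∈ Finset.univ) => mul_self_nonneg (w s i))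
    have h2 := hwle s hs
    nlinarith [Real.sq_sqrt h1, Real.sqrt_nonneg (w s ⬝ᵥ w s)]
  have hVd : ∀ s, HasDerivAt V
      (((A + Bu * K).mulVec (x s) + Bw.mulVec (w s)) ⬝ᵥ P.mulVec (x s)
        + x s ⬝ᵥ P.mulVec ((A + Bu * K).mulVec (x s) + Bw.mulVec (w s))) s :=
    fun s => hasDerivAt_quadform P x _ s (hdyn s)
  have hVcont : Continuous V := by
    have : Differentiable ℝ V := fun s => (hVd s).differentiableAt
    exact this.continuous
  have hinv : ∀ t₀ : ℝ, 0 ≤ t₀ → V t₀ ≤ μ₀ * W ^ 2 := by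
    intro t₀ ht₀
    by_contra hgt
    push_neg at hgt
    set S : Set ℝ := Set.Icc 0 t₀ ∩ V ⁻¹' Set.Iic (μ₀ * W ^ 2) with hSdef
    have hS0 : (0 : ℝ) ∈ S := by
      refine ⟨⟨le_rfl, ht₀⟩, ?_⟩
      have : V 0 = 0 := by simp [hVdef, hx0]
      simp only [Set.mem_preimage, Set.mem_Iic, this]
      positivity
    have hSne : S.Nonempty := ⟨0, hS0⟩
    have hSbdd : BddAbove S := ⟨t₀, fun s hs => hs.1.2⟩
    have hSclosed : IsClosed S :=
      isClosed_Icc.inter (isClosed_Iic.preimage hVcont)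
    set σ := sSup S with hσdef
    have hσS : σ ∈ S := hSclosed.csSup_mem hSne hSbdd
    have hσ0 : 0 ≤ σ := hσS.1.1
    have hσt₀ : σ ≤ t₀ := hσS.1.2
    have hσVle : V σ ≤ μ₀ * W ^ 2 := hσS.2
    have hσlt : σ < t₀ := by
      rcases lt_or_eq_of_le hσt₀ with h | h
      · exact h
      · rw [h] at hσVle; linarith
    have hgt' : ∀ s, σ < s → s ≤ t₀ → μ₀ * W ^ 2 < V s := by
      intro s hs1 hs2
      by_contra hle
      push_neg at hle
      have hmem : s ∈ S := ⟨⟨le_trans hσ0 hs1.le, hs2⟩, hle⟩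
      exact absurd (le_csSup hSbdd hmem) (not_le.mpr hs1)
    have hanti : StrictAntiOn V (Set.Icc σ t₀) := by
      apply strictAntiOn_of_deriv_neg (convex_Icc σ t₀) hVcont.continuousOn
      intro s hs
      rw [interior_Icc] at hs
      rw [(hVd s).deriv]
      apply hi
      have hs0 : 0 ≤ s := le_trans hσ0 hs.1.le
      have h1 : μ₀ * (w s ⬝ᵥ w s) ≤ μ₀ * W ^ 2 :=
        mul_le_mul_of_nonneg_left (hww s hs0) hμ₀.le
      exact lt_of_le_of_lt h1 (hgt' s hs.1 hs.2.le)
    have := hanti (Set.left_mem_Icc.mpr hσlt.le) (Set.right_mem_Icc.mpr hσlt.le) hσlt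
    linarith
  have hz := hii (x t) (w t)
  have hVt : V t ≤ μ₀ * W ^ 2 := hinv t ht
  have hwt := hww t ht
  have hz2 : ((C + D * K).mulVec (x t)) ⬝ᵥ ((C + D * K).mulVec (x t))
      ≤ (μ₀ * μ₁ + μ₂) * W ^ 2 := by nlinarith
  calc Real.sqrt (((C + D * K).mulVec (x t)) ⬝ᵥ ((C + D * K).mulVec (x t)))
      ≤ Real.sqrt ((μ₀ * μ₁ + μ₂) * W ^ 2) := Real.sqrt_le_sqrt hz2
    _ = Real.sqrt (μ₀ * μ₁ + μ₂) * W := by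
        rw [Real.sqrt_mul (by positivity), Real.sqrt_sq hW0]
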